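/- Let T be an interval translation map of finite type, so X = ⋂ₙ Tⁿ([0,1)) is a finite union of half-open intervals and T|_X is a bijection of X. Let J be a component interval of X and R_J the first return map to J. Then J is partitioned into finitely many maximal half-open subintervals J₁, ..., J_N such that R_J is a translation on each Jᵢ, and the images R_J(J₁), ..., R_J(J_N) are pairwise disjoint subsets of J with union equal to J. -/

import Mathlib

/-- An interval translation map on `r` intervals: a map `T : [0,1) -> [0,1)`
with partition points `0 = beta 0 < ... < beta r = 1` such that on each
partition interval `[beta i, beta (i+1))` the map `T` is the translation by `gamma i`. -/
structure ITM (r : Nat) where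
  T : ℝ → ℝ
  β : Fin (r + 1) → ℝ
  γ : Fin r → ℝ
  beta_mono : StrictMono β
  beta_zero : β 0 = 0
  beta_last : β (Fin.last r) = 1
  branch : ∀ i : Fin r, ∀ x ∈ Set.Ico (β i.castSucc) (β i.succ), T x = x + γ i
  maps_to : Set.MapsTo T (Set.Ico 0 1) (Set.Ico 0 1)

open Set Function MeasureTheory
open scoped ENNReal

namespace ITMAux

variable {r : ℕ}

noncomputable def Dset (M : ITM r) (a b : ℝ) : Finset ℝ :=
  (Finset.univ.image M.β) ∪ {a, b}

lemma beta_mem_Dset (M : ITM r) (a b : ℝ) (i : Fin (r+1)) : M.β i ∈ Dset M a b := by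
  simp [Dset]
lemma a_mem_Dset (M : ITM r) (a b : ℝ) : a ∈ Dset M a b := by simp [Dset]
lemma b_mem_Dset (M : ITM r) (a b : ℝ) : b ∈ Dset M a b := by simp [Dset]
lemma one_mem_Dset (M : ITM r) (a b : ℝ) : (1:ℝ) ∈ Dset M a b := by
  have := beta_mem_Dset M a b (Fin.last r); rwa [M.beta_last] at this

noncomputable def rho (M : ITM r) (a b y : ℝ) : ℝ := by
  classical
  exact if h : ((Dset M a b).filter (fun d => y < d)).Nonempty then
    (((Dset M a b).filter (fun d => y < d)).min' h) - y else 1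

lemma rho_spec (M : ITM r) (a b y : ℝ) (hy : y < 1) :
    0 < rho M a b y ∧ (y + rho M a b y ∈ Dset M a b) ∧
    ∀ d ∈ Dset M a b, y < d → rho M a b y ≤ d - y := by
  classical
  have hne : ((Dset M a b).filter (fun d => y < d)).Nonempty :=
    ⟨1, Finset.mem_filter.2 ⟨one_mem_Dset M a b, hy⟩⟩
  have hmem := Finset.min'_mem _ hne
  rw [Finset.mem_filter] at hmem
  refine ⟨?_, ?_, ?_⟩
  · simp only [rho, dif_pos hne]; linarith [hmem.2]
  · simp only [rho, dif_pos hne]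
    have : y + (((Dset M a b).filter (fun d => y < d)).min' hne - y)
        = ((Dset M a b).filter (fun d => y < d)).min' hne := by ring
    rw [this]; exact hmem.1
  · intro d hd hyd
    simp only [rho, dif_pos hne]
    have := Finset.min'_le _ d (Finset.mem_filter.2 ⟨hd, hyd⟩)
    linarith

lemma rho_pos (M : ITM r) (a b y : ℝ) (hy : y < 1) : 0 < rho M a b y :=
  (rho_spec M a b y hy).1

lemma rho_no_cut (M : ITM r) (a b y : ℝ) (hy : y < 1) :
    ∀ d ∈ Dset M a b, d ∉ Set.Ioo y (y + rho M a b y) := by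
  intro d hd hdm
  have := (rho_spec M a b y hy).2.2 d hd hdm.1
  have := hdm.2
  linarith

lemma branch_exists (M : ITM r) (y : ℝ) (hy : y ∈ Set.Ico (0:ℝ) 1) :
    ∃ i : Fin r, y ∈ Set.Ico (M.β i.castSucc) (M.β i.succ) := by
  classical
  have h0 : M.β 0 ≤ y := by rw [M.beta_zero]; exact hy.1
  have hne : (Finset.univ.filter (fun i : Fin (r+1) => M.β i ≤ y)).Nonempty :=
    ⟨0, by simp [h0]⟩
  obtain ⟨i₀, hi₀mem, hi₀max⟩ := Finset.exists_max_image _ id hne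
  rw [Finset.mem_filter] at hi₀mem
  have hi₀ : M.β i₀ ≤ y := hi₀mem.2
  have hi₀ne : i₀ ≠ Fin.last r := by
    intro h; rw [h, M.beta_last] at hi₀; linarith [hy.2]
  obtain ⟨j, rfl⟩ := Fin.exists_castSucc_eq.2 hi₀ne
  refine ⟨j, hi₀, ?_⟩
  by_contra h
  push_neg at h
  have hmem : j.succ ∈ Finset.univ.filter (fun i : Fin (r+1) => M.β i ≤ y) := by
    simp [h]
  have hle := hi₀max _ hmem
  simp only [id] at hle
  have hlt : (j.castSucc : Fin (r+1)) < j.succ := Fin.castSucc_lt_succ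
  exact absurd (le_antisymm hle hlt.le) hlt.ne'

lemma step_translation (M : ITM r) (y : ℝ) (hy : y ∈ Set.Ico (0:ℝ) 1) (ℓ : ℝ)
    (hβ : ∀ i : Fin (r+1), M.β i ∉ Set.Ioo y (y + ℓ)) :
    ∀ w ∈ Set.Ico y (y + ℓ), M.T w = w + (M.T y - y) := by
  obtain ⟨i, hi⟩ := branch_exists M y hy
  have hsub : Set.Ico y (y + ℓ) ⊆ Set.Ico (M.β i.castSucc) (M.β i.succ) := by
    intro w hw
    refine ⟨le_trans hi.1 hw.1, ?_⟩
    rcases lt_or_ge w (M.β i.succ) with h | h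
    · exact h
    · exact absurd ⟨hi.2, lt_of_le_of_lt h hw.2⟩ (hβ i.succ)
  intro w hw
  rw [M.branch i w (hsub hw), M.branch i y hi]; ring

/-! ### Iterate lemmas -/

lemma iterate_injOn (M : ITM r) (X : Set ℝ) (hbij : Set.BijOn M.T X X) :
    ∀ m, Set.InjOn (M.T^[m]) X := by
  intro m
  induction m with
  | zero => simp [Set.injOn_id]
  | succ m ih =>
    intro u hu v hv h
    rw [Function.iterate_succ_apply, Function.iterate_succ_apply] at h
    have := ih (hbij.mapsTo hu) (hbij.mapsTo hv) h
    exact hbij.injOn hu hv this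

lemma iterate_mapsTo (M : ITM r) (X : Set ℝ) (hbij : Set.BijOn M.T X X) (m : ℕ) :
    Set.MapsTo (M.T^[m]) X X := hbij.mapsTo.iterate m

/-- Cancellation: if `T^k u = T^l v` with `k ≤ l` and `u, v ∈ X`, then `u = T^(l-k) v`. -/
lemma cancel (M : ITM r) (X : Set ℝ) (hbij : Set.BijOn M.T X X) {u v : ℝ}
    (hu : u ∈ X) (hv : v ∈ X) {k l : ℕ} (hkl : k ≤ l)
    (h : M.T^[k] u = M.T^[l] v) : u = M.T^[l - k] v := by
  have hl : l = k + (l - k) := by omega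
  rw [hl, Function.iterate_add_apply] at h
  exact iterate_injOn M X hbij k hu (iterate_mapsTo M X hbij (l-k) hv) h

/-! ### The shrinking right-neighborhood sequence -/

noncomputable def hseq (M : ITM r) (a b x : ℝ) : ℕ → ℝ
  | 0 => rho M a b x
  | (k+1) => min (hseq M a b x k) (rho M a b (M.T^[k+1] x))

section Recurrence

variable (M : ITM r) (a b x : ℝ)

lemma hseq_succ_le (k : ℕ) : hseq M a b x (k+1) ≤ hseq M a b x k := min_le_left _ _

lemma hseq_antitone {k l : ℕ} (h : k ≤ l) : hseq M a b x l ≤ hseq M a b x k := by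
  induction l with
  | zero => rw [Nat.le_zero.mp h]
  | succ l ih =>
    rcases Nat.lt_or_ge k (l+1) with h' | h'
    · exact le_trans (hseq_succ_le M a b x l) (ih (by omega))
    · have : k = l + 1 := by omega
      rw [this]

variable (hx01 : ∀ k, M.T^[k] x ∈ Set.Ico (0:ℝ) 1)

lemma hseq_le_rho (k : ℕ) : hseq M a b x k ≤ rho M a b (M.T^[k] x) := by
  cases k with
  | zero => simp [hseq]
  | succ k => exact min_le_right _ _

include hx01 in
lemma hseq_pos (k : ℕ) : 0 < hseq M a b x k := by
  induction k with
  | zero => exact rho_pos M a b x (hx01 0).2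
  | succ k ih => exact lt_min ih (rho_pos M a b _ (hx01 (k+1)).2)

include hx01 in
/-- `T^[k]` is a translation on `[x, x + hseq k)`. -/
lemma hseq_translation (k : ℕ) :
    ∀ w ∈ Set.Ico x (x + hseq M a b x k), M.T^[k] w = w + (M.T^[k] x - x) := by
  induction k with
  | zero => intro w _; simp
  | succ k ih =>
    intro w hw
    have hw' : w ∈ Set.Ico x (x + hseq M a b x k) :=
      ⟨hw.1, lt_of_lt_of_le hw.2 (by linarith [hseq_succ_le M a b x k])⟩
    have h1 := ih w hw'
    have himg : M.T^[k] w ∈ Set.Ico (M.T^[k] x) (M.T^[k] x + hseq M a b x (k+1)) := by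
      rw [h1]; constructor <;> [linarith [hw.1]; linarith [hw.2]]
    have hnoβ : ∀ i : Fin (r+1), M.β i ∉ Set.Ioo (M.T^[k] x) (M.T^[k] x + hseq M a b x (k+1)) := by
      intro i hi
      have hle : hseq M a b x (k+1) ≤ rho M a b (M.T^[k] x) :=
        le_trans (hseq_succ_le M a b x k) (hseq_le_rho M a b x k)
      exact rho_no_cut M a b _ (hx01 k).2 _ (beta_mem_Dset M a b i)
        ⟨hi.1, lt_of_lt_of_le hi.2 (by linarith)⟩
    have h2 := step_translation M (M.T^[k] x) (hx01 k) _ hnoβ _ himg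
    rw [Function.iterate_succ_apply', Function.iterate_succ_apply', h2, h1]
    ring

end Recurrence



/-! ### Recurrence: every point of `[a,b)` returns -/

theorem recurrence (M : ITM r) (X : Set ℝ) (hbij : Set.BijOn M.T X X)
    (hXsub : X ⊆ Set.Ico 0 1) (a b : ℝ) (hab : a < b) (hJ : Set.Ico a b ⊆ X)
    (x : ℝ) (hx : x ∈ Set.Ico a b) :
    ∃ n, 1 ≤ n ∧ M.T^[n] x ∈ Set.Ico a b := by
  by_contra hcon
  push_neg at hcon
  have hJ01 : Set.Ico a b ⊆ Set.Ico (0:ℝ) 1 := fun w hw => hXsub (hJ hw)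
  have hx01 : ∀ k, M.T^[k] x ∈ Set.Ico (0:ℝ) 1 := fun k => (M.maps_to.iterate k) (hJ01 hx)
  have hpos := hseq_pos M a b x hx01
  have htrans := hseq_translation M a b x hx01
  have hxb : x < b := hx.2
  have h0le : hseq M a b x 0 ≤ b - x := by
    have := (rho_spec M a b x (hx01 0).2).2.2 b (b_mem_Dset M a b) hxb
    simpa [hseq] using this
  have hkle : ∀ k, hseq M a b x k ≤ b - x := fun k =>
    le_trans (hseq_antitone M a b x (Nat.zero_le k)) h0le
  have hfloor0 : ∀ k, Set.Ico x (x + hseq M a b x k) ⊆ Set.Ico a b := by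
    intro k w hw
    exact ⟨le_trans hx.1 hw.1, lt_of_lt_of_le hw.2 (by linarith [hkle k])⟩
  have havoid : ∀ k, 1 ≤ k →
      ∀ w ∈ Set.Ico (M.T^[k] x) (M.T^[k] x + hseq M a b x k), w ∉ Set.Ico a b := by
    intro k hk w hw hwJ
    have hyk := hcon k hk
    rcases lt_or_ge (M.T^[k] x) a with h | h
    · have h1 := (rho_spec M a b _ (hx01 k).2).2.2 a (a_mem_Dset M a b) h
      have h2 := hseq_le_rho M a b x k
      have h3 := hw.2
      have h4 := hwJ.1
      linarith
    · have hykb : b ≤ M.T^[k] x := by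
        by_contra h'
        push_neg at h'
        exact hyk ⟨h, h'⟩
      have := hw.1
      have := hwJ.2
      linarith
  -- floors are pairwise disjoint
  have hfloors : ∀ j k, j < k →
      ∀ w, w ∈ Set.Ico (M.T^[j] x) (M.T^[j] x + hseq M a b x j) →
        w ∈ Set.Ico (M.T^[k] x) (M.T^[k] x + hseq M a b x k) → False := by
    intro j k hjk w hwj hwk
    have hum : w - (M.T^[j] x - x) ∈ Set.Ico x (x + hseq M a b x j) := by
      constructor
      · have := hwj.1; linarith
      · have := hwj.2; linarith
    have hvm : w - (M.T^[k] x - x) ∈ Set.Ico x (x + hseq M a b x k) := by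
      constructor
      · have := hwk.1; linarith
      · have := hwk.2; linarith
    have hTu : M.T^[j] (w - (M.T^[j] x - x)) = w := by
      rw [htrans j _ hum]; ring
    have hTv : M.T^[k] (w - (M.T^[k] x - x)) = w := by
      rw [htrans k _ hvm]; ring
    have huX : w - (M.T^[j] x - x) ∈ X := hJ (hfloor0 j hum)
    have hvX : w - (M.T^[k] x - x) ∈ X := hJ (hfloor0 k hvm)
    have hcan : w - (M.T^[j] x - x) = M.T^[k - j] (w - (M.T^[k] x - x)) :=
      cancel M X hbij huX hvX (le_of_lt hjk) (hTu.trans hTv.symm)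
    have hvm' : w - (M.T^[k] x - x) ∈ Set.Ico x (x + hseq M a b x (k - j)) := by
      refine ⟨hvm.1, lt_of_lt_of_le hvm.2 ?_⟩
      have := hseq_antitone M a b x (show k - j ≤ k by omega)
      linarith
    have himg : M.T^[k - j] (w - (M.T^[k] x - x)) ∈
        Set.Ico (M.T^[k-j] x) (M.T^[k-j] x + hseq M a b x (k - j)) := by
      rw [htrans (k - j) _ hvm']
      exact ⟨by linarith [hvm'.1], by linarith [hvm'.2]⟩
    exact havoid (k - j) (by omega) _ himg (by rw [← hcan]; exact hfloor0 j hum)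
  -- the set of shrink times is finite
  have hcuts : {k : ℕ | hseq M a b x (k+1) < hseq M a b x k}.Finite := by
    have key : ∀ k l, k < l →
        M.T^[k+1] x + hseq M a b x (k+1) = M.T^[l+1] x + hseq M a b x (l+1) → False := by
      intro k l hkl heq
      refine hfloors (k+1) (l+1) (by omega) (max (M.T^[k+1] x) (M.T^[l+1] x)) ⟨le_max_left _ _, ?_⟩
        ⟨le_max_right _ _, ?_⟩
      · refine max_lt (by linarith [hpos (k+1)]) ?_
        have := hpos (l+1); linarith
      · refine max_lt ?_ (by linarith [hpos (l+1)])
        have := hpos (k+1); linarith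
    apply Set.Finite.of_finite_image
      (f := fun k => M.T^[k+1] x + hseq M a b x (k+1))
    · apply Set.Finite.subset (Dset M a b).finite_toSet
      rintro d ⟨k, hk, rfl⟩
      simp only [Set.mem_setOf_eq] at hk
      show M.T^[k+1] x + hseq M a b x (k+1) ∈ (↑(Dset M a b) : Set ℝ)
      have h1 : rho M a b (M.T^[k+1] x) < hseq M a b x k := by
        by_contra h'
        push_neg at h'
        have h2 : hseq M a b x (k+1) = hseq M a b x k := min_eq_left h'
        linarith
      have h2 : hseq M a b x (k+1) = rho M a b (M.T^[k+1] x) := min_eq_right (le_of_lt h1)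
      rw [h2]
      exact Finset.mem_coe.2 (rho_spec M a b _ (hx01 (k+1)).2).2.1
    · intro k hk l hl heq
      rcases Nat.lt_trichotomy k l with h | h | h
      · exact absurd heq (fun he => key k l h he)
      · exact h
      · exact absurd heq.symm (fun he => key l k h he)
  -- eventual constancy
  obtain ⟨B, hB⟩ := hcuts.bddAbove
  have hnc : ∀ k, B + 1 ≤ k → hseq M a b x (k+1) = hseq M a b x k := by
    intro k hk
    have : k ∉ {k : ℕ | hseq M a b x (k+1) < hseq M a b x k} := by
      intro hc
      have := hB hc
      omega
    simp only [Set.mem_setOf_eq, not_lt] at this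
    exact le_antisymm (hseq_succ_le M a b x k) this
  set K := B + 1 with hKdef
  have hconst : ∀ k, K ≤ k → hseq M a b x k = hseq M a b x K := by
    intro k hk
    induction k, hk using Nat.le_induction with
    | base => rfl
    | succ k hk ih => rw [hnc k hk, ih]
  set ε := hseq M a b x K with hεdef
  have hεpos : 0 < ε := hpos K
  obtain ⟨n, hn⟩ := exists_nat_gt (1 / ε)
  have hn1 : 1 < n * ε := by
    rw [div_lt_iff₀ hεpos] at hn
    linarith
  -- n disjoint intervals of length ε inside [0,1)
  set f : Fin n → Set ℝ := fun i => Set.Ico (M.T^[K+1+i] x) (M.T^[K+1+i] x + ε) with hfdef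
  have hfeq : ∀ i : Fin n, f i =
      Set.Ico (M.T^[K+1+i] x) (M.T^[K+1+i] x + hseq M a b x (K+1+i)) := by
    intro i
    rw [hfdef]
    simp only
    rw [hconst (K+1+i) (by omega)]
  have hdisj : Pairwise (Disjoint on f) := by
    intro i j hij
    simp only [Function.onFun]
    rw [Set.disjoint_left]
    intro w hwi hwj
    rw [hfeq i] at hwi
    rw [hfeq j] at hwj
    rcases Nat.lt_trichotomy (K+1+(i:ℕ)) (K+1+(j:ℕ)) with h | h | h
    · exact hfloors _ _ h w hwi hwj
    · exact hij (Fin.ext (by omega))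
    · exact hfloors _ _ h w hwj hwi
  have hsub : ∀ i, f i ⊆ Set.Ico (0:ℝ) 1 := by
    intro i w hw
    rw [hfeq i] at hw
    set m := K + 1 + (i : ℕ)
    have hum : w - (M.T^[m] x - x) ∈ Set.Ico x (x + hseq M a b x m) := by
      constructor
      · have := hw.1; linarith
      · have := hw.2; linarith
    have : M.T^[m] (w - (M.T^[m] x - x)) = w := by rw [htrans m _ hum]; ring
    rw [← this]
    exact (M.maps_to.iterate m) (hJ01 (hfloor0 m hum))
  have hvol : volume (⋃ i, f i) = ∑' i, volume (f i) :=
    measure_iUnion hdisj (fun i => measurableSet_Ico)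
  have hvol2 : volume (⋃ i, f i) = (n : ℝ≥0∞) * ENNReal.ofReal ε := by
    rw [hvol, tsum_fintype]
    have : ∀ i : Fin n, volume (f i) = ENNReal.ofReal ε := by
      intro i
      rw [hfdef]
      simp only
      rw [Real.volume_Ico, add_sub_cancel_left]
    rw [Finset.sum_congr rfl (fun i _ => this i)]
    simp [Finset.card_univ, nsmul_eq_mul]
  have hle : volume (⋃ i, f i) ≤ volume (Set.Ico (0:ℝ) 1) :=
    measure_mono (Set.iUnion_subset hsub)
  rw [hvol2, Real.volume_Ico] at hle
  rw [← ENNReal.ofReal_natCast, ← ENNReal.ofReal_mul (by positivity)] at hle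
  rw [ENNReal.ofReal_le_ofReal_iff (by norm_num)] at hle
  norm_num at hle
  linarith


/-! ### The cut set -/

noncomputable def Cset (M : ITM r) (a b : ℝ) : Set ℝ :=
  (Set.Ioo a b ∩ ↑(Dset M a b)) ∪
  {z | z ∈ Set.Ioo a b ∧ ∃ k, 1 ≤ k ∧ M.T^[k] z ∈ (↑(Dset M a b) : Set ℝ) ∧
    ∀ j, 1 ≤ j → j < k → M.T^[j] z ∉ Set.Ico a b}

lemma mem_Cset (M : ITM r) (a b z : ℝ) (hz : z ∈ Set.Ioo a b) (k : ℕ)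
    (hk : M.T^[k] z ∈ (↑(Dset M a b) : Set ℝ))
    (hj : ∀ j, 1 ≤ j → j < k → M.T^[j] z ∉ Set.Ico a b) : z ∈ Cset M a b := by
  cases k with
  | zero => exact Or.inl ⟨hz, by simpa using hk⟩
  | succ k => exact Or.inr ⟨hz, k+1, Nat.succ_le_succ (Nat.zero_le k), hk, hj⟩

/-- If `T^k z = T^l w` with `k ≤ l`, both in `J`, `k ≥ 1`, and `w` does not visit `J`
strictly before time `l`, then `z = w`. -/
lemma return_cancel (M : ITM r) (X : Set ℝ) (hbij : Set.BijOn M.T X X)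
    (a b : ℝ) (hJ : Set.Ico a b ⊆ X) {z w : ℝ} {k l : ℕ}
    (hz : z ∈ Set.Ico a b) (hw : w ∈ Set.Ico a b) (hk1 : 1 ≤ k) (hkl : k ≤ l)
    (heq : M.T^[k] z = M.T^[l] w)
    (hwmin : ∀ j, 1 ≤ j → j < l → M.T^[j] w ∉ Set.Ico a b) : z = w := by
  have hc := cancel M X hbij (hJ hz) (hJ hw) hkl heq
  rcases eq_or_lt_of_le hkl with h | h
  · rw [← h] at hc
    simpa using hc
  · exfalso
    exact hwmin (l - k) (by omega) (by omega) (hc ▸ hz)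

lemma Cset_finite (M : ITM r) (X : Set ℝ) (hbij : Set.BijOn M.T X X)
    (a b : ℝ) (hJ : Set.Ico a b ⊆ X) : (Cset M a b).Finite := by
  classical
  apply Set.Finite.union
  · exact Set.Finite.subset (Dset M a b).finite_toSet Set.inter_subset_right
  · set S := {z | z ∈ Set.Ioo a b ∧ ∃ k, 1 ≤ k ∧ M.T^[k] z ∈ (↑(Dset M a b) : Set ℝ) ∧
      ∀ j, 1 ≤ j → j < k → M.T^[j] z ∉ Set.Ico a b} with hSdef
    set P : ℝ → ℕ → Prop := fun z k => 1 ≤ k ∧ M.T^[k] z ∈ (↑(Dset M a b) : Set ℝ) ∧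
      ∀ j, 1 ≤ j → j < k → M.T^[j] z ∉ Set.Ico a b with hPdef
    set f : ℝ → ℝ := fun z => if h : ∃ k, P z k then M.T^[h.choose] z else 0 with hfdef
    apply Set.Finite.of_finite_image (f := f)
    · apply Set.Finite.subset (Dset M a b).finite_toSet
      rintro d ⟨z, hzS, rfl⟩
      have hex : ∃ k, P z k := hzS.2
      simp only [hfdef, dif_pos hex]
      exact hex.choose_spec.2.1
    · intro z hzS w hwS heq
      have hexz : ∃ k, P z k := hzS.2
      have hexw : ∃ k, P w k := hwS.2
      rw [hfdef] at heq
      simp only [dif_pos hexz, dif_pos hexw] at heq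
      have hz' : z ∈ Set.Ico a b := ⟨le_of_lt hzS.1.1, hzS.1.2⟩
      have hw' : w ∈ Set.Ico a b := ⟨le_of_lt hwS.1.1, hwS.1.2⟩
      rcases le_total hexz.choose hexw.choose with h | h
      · exact return_cancel M X hbij a b hJ hz' hw' hexz.choose_spec.1 h heq
          hexw.choose_spec.2.2
      · exact (return_cancel M X hbij a b hJ hw' hz' hexw.choose_spec.1 h heq.symm
          hexz.choose_spec.2.2).symm

/-! ### The piece lemma -/

lemma piece (M : ITM r) (X : Set ℝ) (hbij : Set.BijOn M.T X X)
    (hXsub : X ⊆ Set.Ico 0 1) (a b : ℝ) (hab : a < b) (hJ : Set.Ico a b ⊆ X)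
    (z z' : ℝ) (hz : z ∈ Set.Ico a b) (hzz' : z < z') (hz'b : z' ≤ b)
    (hgap : ∀ w ∈ Set.Ioo z z', w ∉ Cset M a b)
    (n : ℕ) (hret : M.T^[n] z ∈ Set.Ico a b)
    (hmin : ∀ m, 1 ≤ m → m < n → M.T^[m] z ∉ Set.Ico a b) :
    ∀ k, k ≤ n → (∀ w ∈ Set.Ico z z', M.T^[k] w = w + (M.T^[k] z - z)) ∧
      (1 ≤ k → k < n → ∀ w ∈ Set.Ico z z', M.T^[k] w ∉ Set.Ico a b) := by
  have hJ01 : Set.Ico a b ⊆ Set.Ico (0:ℝ) 1 := fun u hu => hXsub (hJ hu)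
  have orbit01 : ∀ m, M.T^[m] z ∈ Set.Ico (0:ℝ) 1 := fun m => (M.maps_to.iterate m) (hJ01 hz)
  have hIooJ : ∀ w ∈ Set.Ioo z z', w ∈ Set.Ioo a b := by
    intro w hw
    exact ⟨lt_of_le_of_lt hz.1 hw.1, lt_of_lt_of_le hw.2 hz'b⟩
  intro k
  induction k using Nat.strong_induction_on with
  | _ k ih =>
    intro hkn
    have htr : ∀ w ∈ Set.Ico z z', M.T^[k] w = w + (M.T^[k] z - z) := by
      cases k with
      | zero => intro w _; simp
      | succ m =>
        have ihm := ih m (Nat.lt_succ_self m) (by omega)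
        have hnoβ : ∀ i : Fin (r+1),
            M.β i ∉ Set.Ioo (M.T^[m] z) (M.T^[m] z + (z' - z)) := by
          intro i hi
          set w₀ := z + (M.β i - M.T^[m] z) with hw₀def
          have hw₀ : w₀ ∈ Set.Ioo z z' := by
            constructor
            · have := hi.1; simp only [hw₀def]; linarith
            · have := hi.2; simp only [hw₀def]; linarith
          have hTw₀ : M.T^[m] w₀ = M.β i := by
            rw [ihm.1 w₀ ⟨le_of_lt hw₀.1, hw₀.2⟩]
            simp only [hw₀def]; ring
          refine hgap w₀ hw₀ ?_
          refine mem_Cset M a b w₀ (hIooJ w₀ hw₀) m ?_ ?_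
          · rw [hTw₀]; exact Finset.mem_coe.2 (beta_mem_Dset M a b i)
          · intro j hj1 hjm
            exact (ih j (by omega) (by omega)).2 hj1 (by omega) w₀ ⟨le_of_lt hw₀.1, hw₀.2⟩
        intro w hw
        have h1 := ihm.1 w hw
        have himg : M.T^[m] w ∈ Set.Ico (M.T^[m] z) (M.T^[m] z + (z' - z)) := by
          rw [h1]
          exact ⟨by linarith [hw.1], by linarith [hw.2]⟩
        have h2 := step_translation M (M.T^[m] z) (orbit01 m) (z' - z) hnoβ _ himg
        rw [Function.iterate_succ_apply', Function.iterate_succ_apply', h2, h1]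
        ring
    refine ⟨htr, ?_⟩
    intro hk1 hkn' w hw hwJ
    have hyk : M.T^[k] z ∉ Set.Ico a b := hmin k hk1 hkn'
    have hTw := htr w hw
    rcases lt_or_ge (M.T^[k] z) a with h | h
    · rcases le_or_gt (M.T^[k] z + (z' - z)) a with h2 | h2
      · have h3 := hwJ.1
        have h4 := hw.2
        rw [hTw] at h3
        linarith
      · set w₀ := z + (a - M.T^[k] z) with hw₀def
        have hw₀ : w₀ ∈ Set.Ioo z z' := by
          constructor
          · simp only [hw₀def]; linarith
          · simp only [hw₀def]; linarith
        have hTw₀ : M.T^[k] w₀ = a := by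
          rw [htr w₀ ⟨le_of_lt hw₀.1, hw₀.2⟩]
          simp only [hw₀def]; ring
        refine hgap w₀ hw₀ ?_
        refine mem_Cset M a b w₀ (hIooJ w₀ hw₀) k ?_ ?_
        · rw [hTw₀]; exact Finset.mem_coe.2 (a_mem_Dset M a b)
        · intro j hj1 hjk
          exact (ih j hjk (by omega)).2 hj1 (by omega) w₀ ⟨le_of_lt hw₀.1, hw₀.2⟩
    · have hykb : b ≤ M.T^[k] z := by
        by_contra h'
        push_neg at h'
        exact hyk ⟨h, h'⟩
      have h3 := hwJ.2
      have h4 := hw.1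
      rw [hTw] at h3
      linarith

lemma piece_final (M : ITM r) (X : Set ℝ) (hbij : Set.BijOn M.T X X)
    (hXsub : X ⊆ Set.Ico 0 1) (a b : ℝ) (hab : a < b) (hJ : Set.Ico a b ⊆ X)
    (z z' : ℝ) (hz : z ∈ Set.Ico a b) (hzz' : z < z') (hz'b : z' ≤ b)
    (hgap : ∀ w ∈ Set.Ioo z z', w ∉ Cset M a b)
    (n : ℕ) (hn1 : 1 ≤ n) (hret : M.T^[n] z ∈ Set.Ico a b)
    (hmin : ∀ m, 1 ≤ m → m < n → M.T^[m] z ∉ Set.Ico a b) :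
    ∀ w ∈ Set.Ico z z', M.T^[n] w = w + (M.T^[n] z - z) ∧ M.T^[n] w ∈ Set.Ico a b ∧
      ∀ m, 1 ≤ m → m < n → M.T^[m] w ∉ Set.Ico a b := by
  have hp := piece M X hbij hXsub a b hab hJ z z' hz hzz' hz'b hgap n hret hmin
  have htr := (hp n le_rfl).1
  have hIooJ : ∀ w ∈ Set.Ioo z z', w ∈ Set.Ioo a b := by
    intro w hw
    exact ⟨lt_of_le_of_lt hz.1 hw.1, lt_of_lt_of_le hw.2 hz'b⟩
  have hyb : M.T^[n] z + (z' - z) ≤ b := by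
    by_contra h'
    push_neg at h'
    have hynb : M.T^[n] z < b := hret.2
    set w₀ := z + (b - M.T^[n] z) with hw₀def
    have hw₀ : w₀ ∈ Set.Ioo z z' := by
      constructor
      · simp only [hw₀def]; linarith
      · simp only [hw₀def]; linarith
    have hTw₀ : M.T^[n] w₀ = b := by
      rw [htr w₀ ⟨le_of_lt hw₀.1, hw₀.2⟩]
      simp only [hw₀def]; ring
    refine hgap w₀ hw₀ ?_
    refine mem_Cset M a b w₀ (hIooJ w₀ hw₀) n ?_ ?_
    · rw [hTw₀]; exact Finset.mem_coe.2 (b_mem_Dset M a b)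
    · intro j hj1 hjn
      exact (hp j (le_of_lt hjn)).2 hj1 hjn w₀ ⟨le_of_lt hw₀.1, hw₀.2⟩
  intro w hw
  refine ⟨htr w hw, ⟨?_, ?_⟩, ?_⟩
  · rw [htr w hw]
    have := hw.1
    have := hret.1
    linarith
  · rw [htr w hw]
    have := hw.2
    linarith
  · intro m hm1 hmn
    exact (hp m (le_of_lt hmn)).2 hm1 hmn w hw


/-! ### Small helpers -/

lemma telescope : ∀ (K : ℕ) (c : Fin (K+1) → ℝ),
    ∑ k : Fin K, (c k.succ - c k.castSucc) = c (Fin.last K) - c 0 := by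
  intro K
  induction K with
  | zero => intro c; simp [Fin.last]
  | succ K ih =>
    intro c
    rw [Fin.sum_univ_castSucc]
    have h1 : ∀ i : Fin K, c (i.castSucc).succ - c (i.castSucc).castSucc
        = (c ∘ Fin.castSucc) i.succ - (c ∘ Fin.castSucc) i.castSucc := by
      intro i
      simp only [Function.comp_apply, Fin.succ_castSucc]
    rw [Finset.sum_congr rfl (fun i _ => h1 i), ih (c ∘ Fin.castSucc)]
    simp only [Function.comp, Fin.succ_last, Fin.castSucc_zero]
    ring

lemma Ico_disj {a₁ b₁ a₂ b₂ : ℝ} (h : b₁ ≤ a₂) :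
    Disjoint (Set.Ico a₁ b₁) (Set.Ico a₂ b₂) := by
  rw [Set.disjoint_left]
  intro w hw1 hw2
  linarith [hw1.2, hw2.1]

lemma Cset_subset (M : ITM r) (a b : ℝ) : Cset M a b ⊆ Set.Ioo a b := by
  rintro z (hz | hz)
  · exact hz.1
  · exact hz.1

end ITMAux

/-- Structure of the first return map on a component `[a,b)` of the attractor of
a finite type interval translation map: the component is partitioned into
finitely many half-open subintervals on each of which the first return map is a
translation, and the return images are pairwise disjoint with union the whole
component. -/
theorem itm_return_map_structure (r N : ℕ) (M : ITM r)
    (hfin : M.T^[N + 1] '' Set.Ico (0:ℝ) 1 = M.T^[N] '' Set.Ico (0:ℝ) 1)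
    (X : Set ℝ) (hX : X = M.T^[N] '' Set.Ico (0:ℝ) 1)
    (hbij : Set.BijOn M.T X X)
    (a b : ℝ) (hab : a < b) (hJ : Set.Ico a b ⊆ X)
    (hcomp : ∀ ε > (0:ℝ), ¬ Set.Ico (a - ε) b ⊆ X ∧ ¬ Set.Ico a (b + ε) ⊆ X) :
    ∃ (K : ℕ) (c : Fin (K + 1) → ℝ) (nret : Fin K → ℕ),
      1 ≤ K ∧ StrictMono c ∧ c 0 = a ∧ c (Fin.last K) = b ∧
      (∀ k : Fin K,
        1 ≤ nret k ∧
        ∃ t : ℝ, ∀ x ∈ Set.Ico (c k.castSucc) (c k.succ),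
          M.T^[nret k] x = x + t ∧ M.T^[nret k] x ∈ Set.Ico a b ∧
          ∀ m, 1 ≤ m → m < nret k → M.T^[m] x ∉ Set.Ico a b) ∧
      (∀ k l : Fin K, k ≠ l →
        Disjoint (M.T^[nret k] '' Set.Ico (c k.castSucc) (c k.succ))
          (M.T^[nret l] '' Set.Ico (c l.castSucc) (c l.succ))) ∧
      (⋃ k : Fin K, M.T^[nret k] '' Set.Ico (c k.castSucc) (c k.succ)) = Set.Ico a b := by
  classical
  have hXsub : X ⊆ Set.Ico (0:ℝ) 1 := by
    rw [hX]
    exact (M.maps_to.iterate N).image_subset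
  have hCfin := ITMAux.Cset_finite M X hbij a b hJ
  set E : Finset ℝ := hCfin.toFinset ∪ {a, b} with hEdef
  have haE : a ∈ E := by simp [hEdef]
  have hbE : b ∈ E := by simp [hEdef]
  have hEmem : ∀ e ∈ E, a ≤ e ∧ e ≤ b := by
    intro e he
    rw [hEdef, Finset.mem_union, Set.Finite.mem_toFinset] at he
    rcases he with he | he
    · have := ITMAux.Cset_subset M a b he
      exact ⟨le_of_lt this.1, le_of_lt this.2⟩
    · simp only [Finset.mem_insert, Finset.mem_singleton] at he
      rcases he with rfl | rfl
      · exact ⟨le_refl _, le_of_lt hab⟩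
      · exact ⟨le_of_lt hab, le_refl _⟩
  have hcard2 : 1 < E.card := Finset.one_lt_card.2 ⟨a, haE, b, hbE, ne_of_lt hab⟩
  set K := E.card - 1 with hKdef
  have hK1 : 1 ≤ K := by omega
  have hcard : E.card = K + 1 := by omega
  set c : Fin (K+1) → ℝ := fun i => ((E.orderIsoOfFin hcard) i : ℝ) with hcdef
  have hmono : StrictMono c := by
    intro i j hij
    exact (E.orderIsoOfFin hcard).strictMono hij
  have hcmem : ∀ i, c i ∈ E := fun i => (E.orderIsoOfFin hcard i).2
  have hcsurj : ∀ e ∈ E, ∃ i, c i = e := by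
    intro e he
    refine ⟨(E.orderIsoOfFin hcard).symm ⟨e, he⟩, ?_⟩
    show ((E.orderIsoOfFin hcard) ((E.orderIsoOfFin hcard).symm ⟨e, he⟩) : ℝ) = e
    rw [OrderIso.apply_symm_apply]
  have hc0 : c 0 = a := by
    obtain ⟨i, hi⟩ := hcsurj a haE
    have h1 : c 0 ≤ c i := hmono.monotone (Fin.zero_le i)
    have h2 : a ≤ c 0 := (hEmem _ (hcmem 0)).1
    rw [hi] at h1
    linarith
  have hclast : c (Fin.last K) = b := by
    obtain ⟨i, hi⟩ := hcsurj b hbE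
    have h1 : c i ≤ c (Fin.last K) := hmono.monotone (Fin.le_last i)
    have h2 : c (Fin.last K) ≤ b := (hEmem _ (hcmem _)).2
    rw [hi] at h1
    linarith
  have hgap : ∀ i : Fin K, ∀ w ∈ Set.Ioo (c i.castSucc) (c i.succ),
      w ∉ ITMAux.Cset M a b := by
    intro i w hw hwC
    have hwE : w ∈ E := by
      rw [hEdef, Finset.mem_union, Set.Finite.mem_toFinset]
      exact Or.inl hwC
    obtain ⟨j, hj⟩ := hcsurj w hwE
    rw [← hj] at hw
    have h1 : i.castSucc < j := hmono.lt_iff_lt.mp hw.1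
    have h2 : j < i.succ := hmono.lt_iff_lt.mp hw.2
    rw [Fin.lt_def] at h1 h2
    simp only [Fin.coe_castSucc, Fin.val_succ] at h1 h2
    omega
  have hpc0 : ∀ i : Fin K, c i.castSucc ∈ Set.Ico a b := by
    intro i
    refine ⟨hc0 ▸ hmono.monotone (Fin.zero_le _), ?_⟩
    have := hmono (Fin.castSucc_lt_last i)
    rwa [hclast] at this
  have hlt : ∀ i : Fin K, c i.castSucc < c i.succ := fun i => hmono (show i.castSucc < i.succ from Fin.castSucc_lt_succ)
  have hble : ∀ i : Fin K, c i.succ ≤ b := fun i => (hEmem _ (hcmem _)).2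
  have hretex : ∀ i : Fin K, ∃ n, 1 ≤ n ∧ M.T^[n] (c i.castSucc) ∈ Set.Ico a b :=
    fun i => ITMAux.recurrence M X hbij hXsub a b hab hJ _ (hpc0 i)
  set nret : Fin K → ℕ := fun i => Nat.find (hretex i) with hnretdef
  have hnspec : ∀ i, 1 ≤ nret i ∧ M.T^[nret i] (c i.castSucc) ∈ Set.Ico a b :=
    fun i => Nat.find_spec (hretex i)
  have hnmin : ∀ i, ∀ m, 1 ≤ m → m < nret i → M.T^[m] (c i.castSucc) ∉ Set.Ico a b := by
    intro i m hm1 hmn hmem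
    exact Nat.find_min (hretex i) hmn ⟨hm1, hmem⟩
  have hfinal : ∀ i : Fin K, ∀ w ∈ Set.Ico (c i.castSucc) (c i.succ),
      M.T^[nret i] w = w + (M.T^[nret i] (c i.castSucc) - c i.castSucc) ∧
      M.T^[nret i] w ∈ Set.Ico a b ∧
      ∀ m, 1 ≤ m → m < nret i → M.T^[m] w ∉ Set.Ico a b :=
    fun i => ITMAux.piece_final M X hbij hXsub a b hab hJ _ _ (hpc0 i) (hlt i) (hble i)
      (hgap i) (nret i) (hnspec i).1 (hnspec i).2 (hnmin i)
  -- pieces are inside J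
  have hpieceJ : ∀ i : Fin K, Set.Ico (c i.castSucc) (c i.succ) ⊆ Set.Ico a b := by
    intro i w hw
    exact ⟨le_trans (hpc0 i).1 hw.1, lt_of_lt_of_le hw.2 (hble i)⟩
  -- pieces pairwise disjoint
  have hpdisj : ∀ k l : Fin K, k < l →
      Disjoint (Set.Ico (c k.castSucc) (c k.succ)) (Set.Ico (c l.castSucc) (c l.succ)) := by
    intro k l hkl
    apply ITMAux.Ico_disj
    apply hmono.monotone
    rw [Fin.le_def]
    simp only [Fin.coe_castSucc, Fin.val_succ]
    exact hkl
  -- disjointness of return images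
  have hdisjimg : ∀ k l : Fin K, k ≠ l →
      Disjoint (M.T^[nret k] '' Set.Ico (c k.castSucc) (c k.succ))
        (M.T^[nret l] '' Set.Ico (c l.castSucc) (c l.succ)) := by
    have key : ∀ k l : Fin K, k ≠ l → nret k ≤ nret l →
        ∀ w, w ∈ M.T^[nret k] '' Set.Ico (c k.castSucc) (c k.succ) →
          w ∈ M.T^[nret l] '' Set.Ico (c l.castSucc) (c l.succ) → False := by
      intro k l hkl hnle w hwk hwl
      obtain ⟨u, hu, hTu⟩ := hwk
      obtain ⟨v, hv, hTv⟩ := hwl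
      have huJ : u ∈ Set.Ico a b := hpieceJ k hu
      have hvJ : v ∈ Set.Ico a b := hpieceJ l hv
      have hc := ITMAux.cancel M X hbij (hJ huJ) (hJ hvJ) hnle (hTu.trans hTv.symm)
      rcases eq_or_lt_of_le hnle with h | h
      · have h0 : nret l - nret k = 0 := by omega
        rw [h0] at hc
        simp only [Function.iterate_zero_apply] at hc
        subst hc
        rcases lt_or_gt_of_ne hkl with h' | h'
        · exact Set.disjoint_left.1 (hpdisj k l h') hu hv
        · exact Set.disjoint_left.1 (hpdisj l k h') hv hu
      · have hk1 := (hnspec k).1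
        have := (hfinal l v hv).2.2 (nret l - nret k) (by omega) (by omega)
        rw [← hc] at this
        exact this huJ
    intro k l hkl
    rw [Set.disjoint_left]
    intro w hwk hwl
    rcases le_total (nret k) (nret l) with h | h
    · exact key k l hkl h w hwk hwl
    · exact key l k (Ne.symm hkl) h w hwl hwk
  -- image description
  have himg : ∀ k : Fin K, M.T^[nret k] '' Set.Ico (c k.castSucc) (c k.succ) =
      Set.Ico (c k.castSucc + (M.T^[nret k] (c k.castSucc) - c k.castSucc))
        (c k.succ + (M.T^[nret k] (c k.castSucc) - c k.castSucc)) := by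
    intro k
    rw [Set.image_congr (fun u hu => (hfinal k u hu).1)]
    exact Set.image_add_const_Ico _ _ _
  have himgJ : ∀ k : Fin K,
      M.T^[nret k] '' Set.Ico (c k.castSucc) (c k.succ) ⊆ Set.Ico a b := by
    intro k w hw
    obtain ⟨u, hu, rfl⟩ := hw
    exact (hfinal k u hu).2.1
  -- volume of the union of images
  have hvolU : volume (⋃ k : Fin K, M.T^[nret k] '' Set.Ico (c k.castSucc) (c k.succ))
      = ENNReal.ofReal (b - a) := by
    have hmeas : ∀ k : Fin K, MeasurableSet
        (M.T^[nret k] '' Set.Ico (c k.castSucc) (c k.succ)) := by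
      intro k
      rw [himg k]
      exact measurableSet_Ico
    rw [measure_iUnion (fun k l hkl => hdisjimg k l hkl) hmeas, tsum_fintype]
    have hterm : ∀ k : Fin K, volume (M.T^[nret k] '' Set.Ico (c k.castSucc) (c k.succ))
        = ENNReal.ofReal (c k.succ - c k.castSucc) := by
      intro k
      rw [himg k, Real.volume_Ico]
      congr 1
      ring
    rw [Finset.sum_congr rfl (fun k _ => hterm k)]
    rw [← ENNReal.ofReal_sum_of_nonneg (fun k _ => by linarith [hlt k])]
    rw [ITMAux.telescope K c, hc0, hclast]
  -- union equals J
  have hunion : (⋃ k : Fin K, M.T^[nret k] '' Set.Ico (c k.castSucc) (c k.succ))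
      = Set.Ico a b := by
    set U := ⋃ k : Fin K, M.T^[nret k] '' Set.Ico (c k.castSucc) (c k.succ) with hUdef
    have hUsub : U ⊆ Set.Ico a b := Set.iUnion_subset himgJ
    refine Set.Subset.antisymm hUsub ?_
    by_contra hns
    obtain ⟨p, hpJ, hpU⟩ : ∃ p, p ∈ Set.Ico a b ∧ p ∉ U := by
      rcases Set.not_subset.1 hns with ⟨p, hp1, hp2⟩
      exact ⟨p, hp1, hp2⟩
    -- distance from p to each image interval
    set lft : Fin K → ℝ := fun k => c k.castSucc + (M.T^[nret k] (c k.castSucc) - c k.castSucc)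
      with hlftdef
    set rgt : Fin K → ℝ := fun k => c k.succ + (M.T^[nret k] (c k.castSucc) - c k.castSucc)
      with hrgtdef
    have hpnot : ∀ k : Fin K, p ∉ Set.Ico (lft k) (rgt k) := by
      intro k hpk
      exact hpU (Set.mem_iUnion.2 ⟨k, (himg k) ▸ hpk⟩)
    set εf : Fin K → ℝ := fun k => if p < lft k then lft k - p else b - p with hεfdef
    have hne : (Finset.univ : Finset (Fin K)).Nonempty := by
      refine ⟨⟨0, ?_⟩, Finset.mem_univ _⟩
      omega
    set ε := Finset.univ.inf' hne εf with hεdef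
    have hεpos : 0 < ε := by
      rw [hεdef, Finset.lt_inf'_iff]
      intro k _
      rw [hεfdef]
      simp only
      split
      · next h => linarith
      · linarith [hpJ.2]
    have hεle : ∀ k : Fin K, ε ≤ εf k := fun k => Finset.inf'_le _ (Finset.mem_univ k)
    have hεb : p + ε ≤ b := by
      obtain ⟨k, -, hk⟩ := Finset.exists_mem_eq_inf' hne εf
      rw [hεdef, hk, hεfdef]
      simp only
      split
      · next h =>
        have hlb : lft k < b := by
          have hmem : lft k ∈ Set.Ico a b := by
            apply himgJ k
            rw [himg k, hlftdef]
            simp only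
            refine Set.mem_Ico.2 ⟨le_refl _, ?_⟩
            linarith [hlt k]
          exact hmem.2
        linarith
      · linarith
    have hdisjp : Disjoint U (Set.Ico p (p + ε)) := by
      rw [Set.disjoint_left]
      intro w hwU hwp
      obtain ⟨k, hwk⟩ := Set.mem_iUnion.1 hwU
      rw [himg k] at hwk
      have hεk := hεle k
      rw [hεfdef] at hεk
      simp only at hεk
      by_cases h : p < lft k
      · rw [if_pos h] at hεk
        rw [hlftdef] at hεk
        simp only at hεk
        have h5 := hwp.2
        have h6 := hwk.1
        linarith
      · rw [if_neg h] at hεk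
        push_neg at h
        have hpr : rgt k ≤ p := by
          by_contra h'
          push_neg at h'
          exact hpnot k ⟨h, h'⟩
        rw [hrgtdef] at hpr
        simp only at hpr
        have h5 := hwk.2
        have h6 := hwp.1
        linarith
    have hUmeas : MeasurableSet (Set.Ico p (p + ε)) := measurableSet_Ico
    have hle2 : volume (U ∪ Set.Ico p (p + ε)) ≤ volume (Set.Ico a b) := by
      apply measure_mono
      apply Set.union_subset hUsub
      intro w hw
      exact ⟨le_trans hpJ.1 hw.1, lt_of_lt_of_le hw.2 hεb⟩
    rw [measure_union hdisjp hUmeas, hvolU, Real.volume_Ico, Real.volume_Ico,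
      add_sub_cancel_left] at hle2
    have hε0 : ε ≤ 0 := by
      have h1 : ENNReal.ofReal (b - a) + ENNReal.ofReal ε ≤ ENNReal.ofReal (b - a) + 0 := by
        rw [add_zero]
        exact hle2
      have h2 := (ENNReal.add_le_add_iff_left
        (show ENNReal.ofReal (b - a) ≠ ⊤ by simp)).1 h1
      have h3 : ENNReal.ofReal ε = 0 := le_antisymm h2 zero_le
      exact ENNReal.ofReal_eq_zero.1 h3
    linarith
  exact ⟨K, c, nret, hK1, hmono, hc0, hclast,
    fun k => ⟨(hnspec k).1, ⟨M.T^[nret k] (c k.castSucc) - c k.castSucc,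
      fun x hx => hfinal k x hx⟩⟩, hdisjimg, hunion⟩
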